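/- Let M be a model category in which the cofibrations are exactly the monomorphisms. If for every fibration f : T → S between fibrant objects the pullback functor f* : M/S → M/T preserves trivial cofibrations, then M is right proper, i.e., the pullback of any weak equivalence along any fibration is a weak equivalence. -/

import Mathlib

open CategoryTheory CategoryTheory.Limits

variable {M : Type*} [Category M]

/-- `f` is a retract of `g` in the arrow category. -/
def IsRetractOfArrow {X Y X' Y' : M} (f : X ⟶ Y) (g : X' ⟶ Y') : Prop :=
  ∃ (a : X ⟶ X') (b : X' ⟶ X) (c : Y ⟶ Y') (d : Y' ⟶ Y),
    a ≫ b = 𝟙 X ∧ c ≫ d = 𝟙 Y ∧ a ≫ g = f ≫ c ∧ g ≫ d = b ≫ f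

/-- A model structure on a (complete and cocomplete) category `M`: classes of weak
equivalences, cofibrations and fibrations, satisfying two-out-of-three, closure under
retracts, the lifting axioms and the factorization axioms. -/
structure ModelStructure (M : Type*) [Category M] where
  W : MorphismProperty M
  Cof : MorphismProperty M
  Fib : MorphismProperty M
  w_of_isIso : ∀ {X Y : M} (f : X ⟶ Y), IsIso f → W f
  w_comp : ∀ {X Y Z : M} (f : X ⟶ Y) (g : Y ⟶ Z), W f → W g → W (f ≫ g)
  w_of_comp_right : ∀ {X Y Z : M} (f : X ⟶ Y) (g : Y ⟶ Z), W (f ≫ g) → W f → W g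
  w_of_comp_left : ∀ {X Y Z : M} (f : X ⟶ Y) (g : Y ⟶ Z), W (f ≫ g) → W g → W f
  w_retract : ∀ {X Y X' Y' : M} (f : X ⟶ Y) (g : X' ⟶ Y'),
    IsRetractOfArrow f g → W g → W f
  cof_retract : ∀ {X Y X' Y' : M} (f : X ⟶ Y) (g : X' ⟶ Y'),
    IsRetractOfArrow f g → Cof g → Cof f
  fib_retract : ∀ {X Y X' Y' : M} (f : X ⟶ Y) (g : X' ⟶ Y'),
    IsRetractOfArrow f g → Fib g → Fib f
  lift_trivCof_fib : ∀ {A B X Y : M} (i : A ⟶ B) (p : X ⟶ Y),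
    Cof i → W i → Fib p → HasLiftingProperty i p
  lift_cof_trivFib : ∀ {A B X Y : M} (i : A ⟶ B) (p : X ⟶ Y),
    Cof i → Fib p → W p → HasLiftingProperty i p
  factor₁ : ∀ {X Y : M} (f : X ⟶ Y),
    ∃ (Z : M) (i : X ⟶ Z) (p : Z ⟶ Y), Cof i ∧ W i ∧ Fib p ∧ i ≫ p = f
  factor₂ : ∀ {X Y : M} (f : X ⟶ Y),
    ∃ (Z : M) (i : X ⟶ Z) (p : Z ⟶ Y), Cof i ∧ Fib p ∧ W p ∧ i ≫ p = f

section Aux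

variable {M : Type*} [Category M] (S : ModelStructure M)

/-- Retract argument: a map with the RLP against trivial cofibrations is a fibration. -/
lemma ModelStructure.fib_of_rlp {X Y : M} (f : X ⟶ Y)
    (h : ∀ {C D : M} (k : C ⟶ D), S.Cof k → S.W k → HasLiftingProperty k f) :
    S.Fib f := by
  obtain ⟨Z, i, p, hc, hw, hf, hip⟩ := S.factor₁ f
  haveI := h i hc hw
  have sq : CommSq (𝟙 X) i f p := ⟨by simp [hip]⟩
  refine S.fib_retract f p ⟨i, sq.lift, 𝟙 Y, 𝟙 Y, sq.fac_left, by simp, by simp [hip],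
    by simp [sq.fac_right]⟩ hf

/-- Retract argument: a map with the RLP against cofibrations is a weak equivalence. -/
lemma ModelStructure.w_of_rlp {X Y : M} (f : X ⟶ Y)
    (h : ∀ {C D : M} (k : C ⟶ D), S.Cof k → HasLiftingProperty k f) :
    S.W f := by
  obtain ⟨Z, i, p, hc, hf, hw, hip⟩ := S.factor₂ f
  haveI := h i hc
  have sq : CommSq (𝟙 X) i f p := ⟨by simp [hip]⟩
  refine S.w_retract f p ⟨i, sq.lift, 𝟙 Y, 𝟙 Y, sq.fac_left, by simp, by simp [hip],
    by simp [sq.fac_right]⟩ hw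

/-- Fibrations are closed under composition. -/
lemma ModelStructure.fib_comp {X Y Z : M} (f : X ⟶ Y) (g : Y ⟶ Z)
    (hf : S.Fib f) (hg : S.Fib g) : S.Fib (f ≫ g) := by
  refine S.fib_of_rlp _ (fun k hc hw => ?_)
  haveI := S.lift_trivCof_fib k f hc hw hf
  haveI := S.lift_trivCof_fib k g hc hw hg
  infer_instance

/-- Lifting against a pullback. -/
lemma hlp_snd_of_isPullback {P X Y Z C D : M} {fst : P ⟶ X} {snd : P ⟶ Y}
    {f : X ⟶ Z} {g : Y ⟶ Z} (hpb : IsPullback fst snd f g) (k : C ⟶ D)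
    (hk : HasLiftingProperty k f) : HasLiftingProperty k snd := by
  constructor
  intro top bottom sq
  have sq2 : CommSq (top ≫ fst) k f (bottom ≫ g) :=
    ⟨by rw [Category.assoc, hpb.w, ← Category.assoc, sq.w, Category.assoc]⟩
  refine ⟨⟨⟨hpb.lift sq2.lift bottom (by rw [sq2.fac_right]), ?_, ?_⟩⟩⟩
  · apply hpb.hom_ext
    · rw [Category.assoc, hpb.lift_fst, sq2.fac_left]
    · rw [Category.assoc, hpb.lift_snd, sq.w]
  · exact hpb.lift_snd _ _ _

/-- Fibrations are stable under pullback. -/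
lemma ModelStructure.fib_of_isPullback {P X Y Z : M} {fst : P ⟶ X} {snd : P ⟶ Y}
    {f : X ⟶ Z} {g : Y ⟶ Z} (hpb : IsPullback fst snd f g) (hf : S.Fib f) :
    S.Fib snd :=
  S.fib_of_rlp _ (fun k hc hw =>
    hlp_snd_of_isPullback hpb k (S.lift_trivCof_fib k f hc hw hf))

/-- The pullback of a trivial fibration is a weak equivalence. -/
lemma ModelStructure.w_of_isPullback_trivFib {P X Y Z : M} {fst : P ⟶ X} {snd : P ⟶ Y}
    {f : X ⟶ Z} {g : Y ⟶ Z} (hpb : IsPullback fst snd f g) (hg : S.Fib g) (hgw : S.W g) :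
    S.W fst :=
  S.w_of_rlp _ (fun k hc =>
    hlp_snd_of_isPullback hpb.flip k (S.lift_cof_trivFib k g hc hg hgw))

/-- The key case: the pullback of a trivial cofibration along a fibration is a
weak equivalence, given the hypothesis on pullback functors. -/
lemma ModelStructure.w_of_isPullback_trivCof [HasLimits M]
    (hcof : S.Cof = MorphismProperty.monomorphisms M)
    (hyp : ∀ {T B : M} (f : T ⟶ B), S.Fib f →
      S.Fib (terminal.from T) → S.Fib (terminal.from B) →
      ∀ {x y : Over B} (i : x ⟶ y), S.Cof i.left → S.W i.left →
        S.Cof (((Over.pullback f).map i).left) ∧ S.W (((Over.pullback f).map i).left))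
    {X' A X B : M} (w' : X' ⟶ X) (q : X' ⟶ A) (p : X ⟶ B) (i : A ⟶ B)
    (hpb : IsPullback w' q p i) (hci : S.Cof i) (hwi : S.W i) (hp : S.Fib p) :
    S.W w' := by
  -- fibrant replacement of `B`
  obtain ⟨B', j, pB, hcj, hwj, hfB, hjp⟩ := S.factor₁ (terminal.from B)
  have hfB' : S.Fib (terminal.from B') := by
    rw [terminal.hom_ext (terminal.from B') pB]; exact hfB
  -- fibrant replacement of `X` over `B'`
  obtain ⟨Xh, l, r, hcl, hwl, hfr, hlr⟩ := S.factor₁ (p ≫ j)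
  have hfXh : S.Fib (terminal.from Xh) := by
    rw [terminal.hom_ext (terminal.from Xh) (r ≫ terminal.from B')]
    exact S.fib_comp r (terminal.from B') hfr hfB'
  -- the two morphisms in `Over B'`
  let α : Over.mk (i ≫ j) ⟶ Over.mk j := Over.homMk i
  let β : Over.mk j ⟶ Over.mk (𝟙 B') := Over.homMk j
  have hα := hyp r hfr hfXh hfB' α hci hwi
  have hβ := hyp r hfr hfXh hfB' β hcj hwj
  set g : (pullback (i ≫ j) r : M) ⟶ pullback j r := ((Over.pullback r).map α).left with hg
  set π : (pullback j r : M) ⟶ pullback (𝟙 B') r := ((Over.pullback r).map β).left with hπ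
  have hg_fst : g ≫ pullback.fst j r = pullback.fst (i ≫ j) r ≫ i := by
    simp [hg, α]
    exact pullback.lift_fst _ _ _
  have hg_snd : g ≫ pullback.snd j r = pullback.snd (i ≫ j) r := by
    simp [hg]
    exact pullback.lift_snd _ _ _
  have hπ_snd : π ≫ pullback.snd (𝟙 B') r = pullback.snd j r := by
    simp [hπ]
    exact pullback.lift_snd _ _ _
  -- the projection `pullback (𝟙 B') r ⟶ Xh` is an isomorphism
  have hσ : IsIso (pullback.snd (𝟙 B') r) := by
    refine ⟨pullback.lift r (𝟙 Xh) (by simp), ?_, pullback.lift_snd _ _ _⟩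
    apply pullback.hom_ext
    · rw [Category.assoc]
      refine (congrArg (pullback.snd (𝟙 B') r ≫ ·) (pullback.lift_fst (f := 𝟙 B') (g := r) r (𝟙 Xh) _)).trans ?_
      simpa using (pullback.condition (f := 𝟙 B') (g := r)).symm
    · rw [Category.assoc]
      exact (congrArg (pullback.snd (𝟙 B') r ≫ ·) (pullback.lift_snd (f := 𝟙 B') (g := r) r (𝟙 Xh) _)).trans ((Category.comp_id _).trans (Category.id_comp _).symm)
  -- the comparison map `v : X ⟶ pullback j r`
  have hvw : p ≫ j = l ≫ r := hlr.symm
  let v : X ⟶ pullback j r := pullback.lift p l hvw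
  have hv_fst : v ≫ pullback.fst j r = p := pullback.lift_fst _ _ _
  have hv_snd : v ≫ pullback.snd j r = l := pullback.lift_snd _ _ _
  -- `v` is a weak equivalence
  have hwv : S.W v := by
    refine S.w_of_comp_left v (π ≫ pullback.snd (𝟙 B') r) ?_
      (S.w_comp _ _ hβ.2 (S.w_of_isIso _ hσ))
    have : v ≫ π ≫ pullback.snd (𝟙 B') r = l := by
      rw [hπ_snd, hv_snd]
    rw [this]; exact hwl
  -- `v` is a cofibration (a monomorphism)
  have hcv : S.Cof v := by
    rw [hcof]
    have hml : Mono l := by rw [hcof] at hcl; exact hcl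
    have : Mono (v ≫ pullback.snd j r) := by rw [hv_snd]; exact hml
    exact mono_of_mono v (pullback.snd j r)
  -- a retraction `ρ` of `v` over `B`
  haveI := S.lift_trivCof_fib v p hcv hwv hp
  have sq : CommSq (𝟙 X) v p (pullback.fst j r) := ⟨by simp [hv_fst]⟩
  set ρ : (pullback j r : M) ⟶ X := sq.lift with hρ
  have hρ1 : v ≫ ρ = 𝟙 X := sq.fac_left
  have hρ2 : ρ ≫ p = pullback.fst j r := sq.fac_right
  -- the comparison map `u : X' ⟶ pullback (i ≫ j) r`
  have huw : q ≫ i ≫ j = (w' ≫ l) ≫ r := by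
    rw [Category.assoc, hlr, ← Category.assoc, ← hpb.w, Category.assoc]
  let u : X' ⟶ pullback (i ≫ j) r := pullback.lift q (w' ≫ l) huw
  have hu_fst : u ≫ pullback.fst (i ≫ j) r = q := pullback.lift_fst _ _ _
  have hu_snd : u ≫ pullback.snd (i ≫ j) r = w' ≫ l := pullback.lift_snd _ _ _
  -- the map `b : pullback (i ≫ j) r ⟶ X'`
  have hbw : (g ≫ ρ) ≫ p = pullback.fst (i ≫ j) r ≫ i := by
    rw [Category.assoc, hρ2, hg_fst]
  let b : (pullback (i ≫ j) r : M) ⟶ X' := hpb.lift (g ≫ ρ) (pullback.fst (i ≫ j) r) hbw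
  have hb_w : b ≫ w' = g ≫ ρ := hpb.lift_fst _ _ _
  have hb_q : b ≫ q = pullback.fst (i ≫ j) r := hpb.lift_snd _ _ _
  -- `u ≫ g = w' ≫ v`
  have hug : u ≫ g = w' ≫ v := by
    apply pullback.hom_ext
    · rw [Category.assoc, Category.assoc, hg_fst, hv_fst, ← Category.assoc, hu_fst, hpb.w]
    · rw [Category.assoc, Category.assoc, hg_snd, hv_snd, hu_snd]
  -- `w'` is a retract of `g`
  have hret : IsRetractOfArrow w' g := by
    refine ⟨u, b, v, ρ, ?_, hρ1, hug, hb_w.symm⟩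
    apply hpb.hom_ext
    · rw [Category.assoc, hb_w, ← Category.assoc, hug, Category.assoc, hρ1,
        Category.comp_id, Category.id_comp]
    · rw [Category.assoc, hb_q, hu_fst, Category.id_comp]
  exact S.w_retract w' g hret hα.2

end Aux

/-- Let `M` be a model category in which the cofibrations are exactly the monomorphisms.
If for every fibration `f : T ⟶ S` between fibrant objects the pullback functor
`f^* : M/S ⥤ M/T` preserves trivial cofibrations, then `M` is right proper: the pullback of
any weak equivalence along any fibration is a weak equivalence. -/
theorem right_proper_of_pullback_preserves_trivCof
    {M : Type*} [Category M] [HasLimits M] [HasColimits M] (S : ModelStructure M)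
    (hcof : S.Cof = MorphismProperty.monomorphisms M)
    (hyp : ∀ {T B : M} (f : T ⟶ B), S.Fib f →
      S.Fib (terminal.from T) → S.Fib (terminal.from B) →
      ∀ {x y : Over B} (i : x ⟶ y), S.Cof i.left → S.W i.left →
        S.Cof (((Over.pullback f).map i).left) ∧ S.W (((Over.pullback f).map i).left)) :
    ∀ {A B X X' : M} (w : A ⟶ B) (p : X ⟶ B) (w' : X' ⟶ X) (q : X' ⟶ A),
      IsPullback w' q p w → S.W w → S.Fib p → S.W w' := by
  intro A B X X' w p w' q hpb hw hp
  -- factor `w` as a trivial cofibration followed by a trivial fibration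
  obtain ⟨Z, i, t, hci, hft, hwt, hit⟩ := S.factor₂ w
  have hwi : S.W i := S.w_of_comp_left i t (by rw [hit]; exact hw) hwt
  -- the pullback of `t` along `p`
  have hPB : IsPullback (pullback.fst p t) (pullback.snd p t) p t :=
    IsPullback.of_hasPullback p t
  have hfsnd : S.Fib (pullback.snd p t) := S.fib_of_isPullback hPB hp
  have hwfst : S.W (pullback.fst p t) := S.w_of_isPullback_trivFib hPB hft hwt
  -- the comparison map `m : X' ⟶ pullback p t`
  have hmw : w' ≫ p = (q ≫ i) ≫ t := by rw [hpb.w, ← hit, Category.assoc]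
  let m : X' ⟶ (pullback p t : M) := pullback.lift w' (q ≫ i) hmw
  have hm_fst : m ≫ pullback.fst p t = w' := pullback.lift_fst _ _ _
  have hm_snd : m ≫ pullback.snd p t = q ≫ i := pullback.lift_snd _ _ _
  -- the left square is a pullback
  have hleft : IsPullback m q (pullback.snd p t) i := by
    apply IsPullback.of_right _ hm_snd hPB
    rw [hm_fst, hit]
    exact hpb
  have hwm : S.W m := S.w_of_isPullback_trivCof hcof hyp m q (pullback.snd p t) i
    hleft hci hwi hfsnd
  rw [← hm_fst]
  exact S.w_comp m (pullback.fst p t) hwm hwfst
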